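/- Let k be a field and let I ⊆ k⟦x₁,…,x_e⟧ be a prime ideal containing x_{i−1}x_{i+1} − xᵢ^{aᵢ} for all i = 2,…,e−1 (where aᵢ ≥ 2), and suppose xᵢ ∉ I for all i = 1,…,e. Then I contains all of Riemenschneider's equations g_{i,j} for 2 ≤ i+1 ≤ j−1 ≤ e−1. -/
import Mathlib

private lemma prod_ite_split' {R : Type*} [CommMonoid R] {e : ℕ} (f g : Fin e → R) (m : Fin e)
    (h1 : ∀ l, l ≠ m → f l = g l) (h2 : g m = 1) :
    ∏ l, f l = f m * ∏ l, g l := by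
  rw [← Finset.mul_prod_erase Finset.univ f (Finset.mem_univ m),
      ← Finset.mul_prod_erase Finset.univ g (Finset.mem_univ m), h2, one_mul]
  congr 1
  exact Finset.prod_congr rfl fun l hl => h1 l (Finset.ne_of_mem_erase hl)

open MvPowerSeries in
/-- second case of the classification theorem.  A prime ideal
`I ⊆ k⟦x₁,…,x_e⟧` containing the toric binomials `x_{i−1}x_{i+1} − xᵢ^{aᵢ}` and
containing no variable contains all of Riemenschneider's equations `g_{i,j}`.
(Variables are indexed `0,…,e−1`.) -/
theorem stmt9 (k : Type*) [Field k] (e : ℕ) (he : 3 ≤ e)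
    (a : ℕ → ℕ) (ha : ∀ i, 1 ≤ i → i ≤ e - 2 → 2 ≤ a i)
    (I : Ideal (MvPowerSeries (Fin e) k)) (hprime : I.IsPrime)
    (hrel : ∀ i : ℕ, ∀ h1 : 1 ≤ i, ∀ h2 : i ≤ e - 2,
      X (⟨i - 1, by omega⟩ : Fin e) * X (⟨i + 1, by omega⟩ : Fin e) -
        X (⟨i, by omega⟩ : Fin e) ^ a i ∈ I)
    (hnovar : ∀ i : Fin e, X i ∉ I) :
    ∀ i j : ℕ, ∀ h1 : i + 2 ≤ j, ∀ h2 : j ≤ e - 1,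
      (if j = i + 2 then
        X (⟨i, by omega⟩ : Fin e) * X (⟨j, by omega⟩ : Fin e) -
          X (⟨i + 1, by omega⟩ : Fin e) ^ a (i + 1)
      else
        X (⟨i, by omega⟩ : Fin e) * X (⟨j, by omega⟩ : Fin e) -
          X (⟨i + 1, by omega⟩ : Fin e) ^ (a (i + 1) - 1) *
            (∏ l : Fin e, if i + 1 < (l : ℕ) ∧ (l : ℕ) < j - 1 then
              X l ^ (a (l : ℕ) - 2) else 1) *
            X (⟨j - 1, by omega⟩ : Fin e) ^ (a (j - 1) - 1)) ∈ I := by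
  intro i j h1
  induction j, h1 using Nat.le_induction with
  | base =>
    intro h2
    rw [if_pos rfl]
    have h := hrel (i + 1) (by omega) (by omega)
    simp only [Nat.add_sub_cancel] at h
    convert h using 3
  | succ n hn IH =>
    intro h2
    have IH' := IH (by omega)
    rw [if_neg (by omega)]
    simp only [Nat.add_sub_cancel]
    have hrel' := hrel n (by omega) (by omega)
    have han : a n - 1 + 1 = a n := by have := ha n (by omega) (by omega); omega
    rw [← han] at hrel'
    rcases eq_or_lt_of_le hn with hni | hni
    · -- base-adjacent case: n = i + 2
      subst hni
      rw [if_pos rfl] at IH'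
      have hb : a (i + 1) - 1 + 1 = a (i + 1) := by
        have := ha (i + 1) (by omega) (by omega); omega
      rw [← hb] at IH'
      have hP : (∏ l : Fin e, if i + 1 < (l : ℕ) ∧ (l : ℕ) < i + 2 then
          X l ^ (a (l : ℕ) - 2) else (1 : MvPowerSeries (Fin e) k)) = 1 :=
        Finset.prod_eq_one fun l _ => if_neg (by omega)
      rw [hP]
      refine (hprime.mem_or_mem (show X (⟨i + 2, by omega⟩ : Fin e) * _ ∈ I from ?_)).resolve_left
        (hnovar _)
      have h := I.add_mem
        (I.mul_mem_left (X (⟨i + 2 + 1, by omega⟩ : Fin e)) IH')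
        (I.mul_mem_left (X (⟨i + 1, by omega⟩ : Fin e) ^ (a (i + 1) - 1)) hrel')
      have hind : (⟨i + 2 - 1, by omega⟩ : Fin e) = (⟨i + 1, by omega⟩ : Fin e) := rfl
      rw [hind] at h
      convert h using 1
      ring
    · -- general case: n ≥ i + 3
      rw [if_neg (by omega)] at IH'
      have hb : a (n - 1) - 2 + 1 = a (n - 1) - 1 := by
        have := ha (n - 1) (by omega) (by omega); omega
      rw [← hb] at IH'
      have hsplit : (∏ l : Fin e, if i + 1 < (l : ℕ) ∧ (l : ℕ) < n then
            X l ^ (a (l : ℕ) - 2) else (1 : MvPowerSeries (Fin e) k))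
          = X (⟨n - 1, by omega⟩ : Fin e) ^ (a (n - 1) - 2) *
            ∏ l : Fin e, (if i + 1 < (l : ℕ) ∧ (l : ℕ) < n - 1 then
              X l ^ (a (l : ℕ) - 2) else 1) := by
        rw [prod_ite_split' _
          (fun l => if i + 1 < (l : ℕ) ∧ (l : ℕ) < n - 1 then X l ^ (a (l : ℕ) - 2) else 1)
          (⟨n - 1, by omega⟩ : Fin e) ?_ (if_neg (show ¬(i + 1 < ((⟨n - 1, by omega⟩ : Fin e) : ℕ) ∧ ((⟨n - 1, by omega⟩ : Fin e) : ℕ) < n - 1) from by simp only [Fin.val_mk]; omega))]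
        · rw [if_pos (show i + 1 < ((⟨n - 1, by omega⟩ : Fin e) : ℕ) ∧ ((⟨n - 1, by omega⟩ : Fin e) : ℕ) < n from by simp only [Fin.val_mk]; omega)]
        · intro l hl
          have hlv : (l : ℕ) ≠ n - 1 := fun hv => hl (Fin.ext hv)
          refine if_congr ?_ rfl rfl
          constructor <;> rintro ⟨u, v⟩ <;> exact ⟨u, by omega⟩
      rw [hsplit]
      refine (hprime.mem_or_mem (show X (⟨n, by omega⟩ : Fin e) * _ ∈ I from ?_)).resolve_left
        (hnovar _)
      have h := I.add_mem
        (I.mul_mem_left (X (⟨n + 1, by omega⟩ : Fin e)) IH')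
        (I.mul_mem_left (X (⟨i + 1, by omega⟩ : Fin e) ^ (a (i + 1) - 1) *
          (∏ l : Fin e, if i + 1 < (l : ℕ) ∧ (l : ℕ) < n - 1 then
            X l ^ (a (l : ℕ) - 2) else 1) *
          X (⟨n - 1, by omega⟩ : Fin e) ^ (a (n - 1) - 2)) hrel')
      convert h using 1
      ring
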